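/- Assume μ ≥ 1, Γ has at least one edge, and Γ has at least one pair of distinct non-adjacent vertices. Let s = (λ − μ − √((λ−μ)² + 4(k−μ)))/2 and y = A − s·I. Then the affine dimension d of P(V) satisfies (d : ℝ) = (v − 1 − (2k + (v−1)(λ−μ))/√((λ−μ)² + 4(k−μ)))/2, i.e., the affine dimension of P(V) equals the multiplicity f of the second-largest eigenvalue of A. -/

import Mathlib

open scoped RealInnerProductSpace

/-- The `i`-th column of `y = A - s·I`, where `A` is the real adjacency matrix of `G`,
viewed as a point of Euclidean space `ℝ^V`. -/
noncomputable def srgCol {V : Type*} [Fintype V] [DecidableEq V]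
    (G : SimpleGraph V) [DecidableRel G.Adj] (s : ℝ) (i : V) : EuclideanSpace ℝ V :=
  (WithLp.equiv 2 (V → ℝ)).symm fun j => (G.adjMatrix ℝ - s • (1 : Matrix V V ℝ)) j i


/-- The affine dimension of a point set: the finrank of the direction of its affine span. -/
noncomputable def adim {V : Type*} [Fintype V] (X : Set (EuclideanSpace ℝ V)) : ℕ :=
  Module.finrank ℝ (affineSpan ℝ X).direction

lemma adim_aux {E : Type*} [AddCommGroup E] [Module ℝ E] [FiniteDimensional ℝ E]
    (X : Set E) (σ : E →ₗ[ℝ] ℝ) (c : ℝ) (hc : c ≠ 0) (x₀ : E) (hx₀ : x₀ ∈ X)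
    (hX : ∀ x ∈ X, σ x = c) :
    Module.finrank ℝ (vectorSpan ℝ X) + 1 = Module.finrank ℝ (Submodule.span ℝ X) := by
  have hWker : vectorSpan ℝ X ≤ LinearMap.ker σ := by
    rw [vectorSpan_def, Submodule.span_le]
    rintro _ ⟨a, ha, b, hb, rfl⟩
    simp [LinearMap.mem_ker, vsub_eq_sub, hX a ha, hX b hb]
  have hx0ne : x₀ ≠ 0 := by
    intro h
    apply hc
    rw [← hX x₀ hx₀, h, map_zero]
  have hspan : Submodule.span ℝ X = vectorSpan ℝ X ⊔ Submodule.span ℝ {x₀} := by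
    apply le_antisymm
    · rw [Submodule.span_le]
      intro x hx
      have hxx : x = (x - x₀) + x₀ := by abel
      rw [hxx]
      exact Submodule.add_mem _
        (Submodule.mem_sup_left (by simpa [vsub_eq_sub] using vsub_mem_vectorSpan ℝ hx hx₀))
        (Submodule.mem_sup_right (Submodule.mem_span_singleton_self x₀))
    · apply sup_le
      · rw [vectorSpan_def, Submodule.span_le]
        rintro _ ⟨a, ha, b, hb, rfl⟩
        simpa [vsub_eq_sub] using
          Submodule.sub_mem _ (Submodule.subset_span ha) (Submodule.subset_span hb)
      · exact Submodule.span_mono (by simpa using hx₀)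
  have hdisj : vectorSpan ℝ X ⊓ Submodule.span ℝ {x₀} = ⊥ := by
    rw [Submodule.eq_bot_iff]
    rintro y hy
    rw [Submodule.mem_inf] at hy
    obtain ⟨t, rfl⟩ := Submodule.mem_span_singleton.1 hy.2
    have h0 : σ (t • x₀) = 0 := hWker hy.1
    rw [map_smul, hX x₀ hx₀, smul_eq_mul] at h0
    rcases mul_eq_zero.1 h0 with h | h
    · simp [h]
    · exact absurd h hc
  have h := Submodule.finrank_sup_add_finrank_inf_eq (vectorSpan ℝ X) (Submodule.span ℝ {x₀})
  rw [hdisj, finrank_bot, add_zero, finrank_span_singleton hx0ne, ← hspan] at h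
  omega

open SimpleGraph Polynomial Matrix in
set_option maxHeartbeats 1600000 in
theorem stmt_15 {V : Type*} [Fintype V] [DecidableEq V]
    (G : SimpleGraph V) [DecidableRel G.Adj] (v k l m : ℕ)
    (hG : G.IsSRGWith v k l m) (hm : 1 ≤ m)
    (hedge : ∃ i j : V, G.Adj i j)
    (hnonadj : ∃ i j : V, i ≠ j ∧ ¬G.Adj i j)
    (s : ℝ)
    (hs : s = ((l : ℝ) - m - Real.sqrt (((l : ℝ) - m) ^ 2 + 4 * ((k : ℝ) - m))) / 2) :
    (adim (Set.range (srgCol G s)) : ℝ) =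
      ((v : ℝ) - 1 - (2 * (k : ℝ) + ((v : ℝ) - 1) * ((l : ℝ) - m)) /
          Real.sqrt (((l : ℝ) - m) ^ 2 + 4 * ((k : ℝ) - m))) / 2 := by
  classical
  obtain ⟨i0, j0, hadj⟩ := hedge
  obtain ⟨i1, j1, hne1, hnadj⟩ := hnonadj
  -- basic natural-number facts
  have hk1 : 1 ≤ k := by
    have h := hG.regular i0
    have : 0 < G.degree i0 := by
      rw [G.degree_pos_iff_exists_adj i0]; exact ⟨j0, hadj⟩
    omega
  have hlk : l + 1 ≤ k := by
    have hsub : G.commonNeighbors i0 j0 ⊂ G.neighborSet i0 := by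
      constructor
      · intro x hx; exact hx.1
      · intro hcon
        exact (notMem_commonNeighbors_right G i0 j0) (hcon hadj)
    have hlt : Fintype.card (G.commonNeighbors i0 j0) < Fintype.card (G.neighborSet i0) :=
      Set.card_lt_card hsub
    rw [hG.of_adj i0 j0 hadj, G.card_neighborSet_eq_degree, hG.regular i0] at hlt
    omega
  have hmk : m ≤ k := by
    have h := G.card_commonNeighbors_le_degree_left i1 j1
    rw [hG.of_not_adj hne1 hnadj, hG.regular i1] at h
    exact h
  have hkv : k + 1 ≤ v := by
    have h := G.degree_lt_card_verts i0
    rw [hG.regular i0, hG.card] at h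
    omega
  -- real-number setup
  set L : ℝ := (l : ℝ) - m with hL
  set D : ℝ := L ^ 2 + 4 * ((k : ℝ) - m) with hD
  have hk1R : (1 : ℝ) ≤ (k : ℝ) := by exact_mod_cast hk1
  have hm1R : (1 : ℝ) ≤ (m : ℝ) := by exact_mod_cast hm
  have hmkR : (m : ℝ) ≤ (k : ℝ) := by exact_mod_cast hmk
  have hlkR : (l : ℝ) + 1 ≤ (k : ℝ) := by exact_mod_cast hlk
  have hkvR : (k : ℝ) + 1 ≤ (v : ℝ) := by exact_mod_cast hkv
  have hD0 : 0 < D := by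
    rcases lt_or_ge (l : ℕ) m with h | h
    · have : (l : ℝ) + 1 ≤ (m : ℝ) := by exact_mod_cast h
      nlinarith [sq_nonneg (L + 1)]
    · have : (m : ℝ) ≤ (l : ℝ) := by exact_mod_cast h
      nlinarith
  set sd : ℝ := Real.sqrt D with hsd
  have hsd2 : sd ^ 2 = D := Real.sq_sqrt hD0.le
  have hsd0 : 0 < sd := Real.sqrt_pos.2 hD0
  have hskey : s = (L - sd) / 2 := hs
  set r : ℝ := (L + sd) / 2 with hr
  have hsdk : sd < 2 * (k : ℝ) - L := by
    rw [hsd]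
    rw [Real.sqrt_lt' (by nlinarith)]
    nlinarith [mul_nonneg (hk1R.trans' zero_le_one) (by nlinarith : (0:ℝ) ≤ (k:ℝ) - l - 1)]
  have hsk : s < k := by rw [hskey]; nlinarith
  have hrk : r < k := by rw [hr]; nlinarith
  have hrsum : r + s = L := by rw [hr, hskey]; ring
  have hrprod : r * s = (m : ℝ) - k := by
    have h1 : r * s = (L ^ 2 - sd ^ 2) / 4 := by rw [hr, hskey]; ring
    rw [h1, hsd2, hD]; ring
  have hfeasN := SimpleGraph.IsSRGWith.param_eq G hG (by omega : 0 < v)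
  have hfeas : (k : ℝ) * ((k : ℝ) - l - 1) = ((v : ℝ) - k - 1) * m := by
    have h2 : k * (k - (l + 1)) = (v - (k + 1)) * m := by
      rw [Nat.sub_sub, Nat.sub_sub] at hfeasN; exact hfeasN
    have h3 := congrArg (Nat.cast : ℕ → ℝ) h2
    rw [Nat.cast_mul, Nat.cast_mul, Nat.cast_sub hlk, Nat.cast_sub hkv] at h3
    push_cast at h3
    linarith
  -- matrix setup
  set A := G.adjMatrix ℝ with hA
  set Jm : Matrix V V ℝ := Matrix.of (fun _ _ => (1:ℝ)) with hJm
  have hcompl : Gᶜ.adjMatrix ℝ = Jm - 1 - A := by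
    ext a b
    by_cases hab : a = b
    · subst hab; simp [hJm, hA, Matrix.one_apply]
    · by_cases hadj' : G.Adj a b
      · simp [hJm, hA, compl_adj, hab, hadj', Matrix.one_apply]
      · simp [hJm, hA, compl_adj, hab, hadj', Matrix.one_apply]
  have hA2 : A * A = (k:ℝ) • (1 : Matrix V V ℝ) + (l:ℝ) • A + (m:ℝ) • (Jm - 1 - A) := by
    have h := hG.matrix_eq (α := ℝ)
    rw [hcompl] at h
    rw [← sq]
    simpa [← Nat.cast_smul_eq_nsmul ℝ] using h
  have hAJ : A * Jm = (k:ℝ) • Jm := by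
    ext a b
    simp [hA, hJm, adjMatrix_mul_apply, hG.regular a]
  have hJA : Jm * A = (k:ℝ) • Jm := by
    ext a b
    simp [hA, hJm, mul_adjMatrix_apply, hG.regular b]
  have hq : (A - r • 1) * (A - s • 1) = (m:ℝ) • Jm := by
    have expand : (A - r • 1) * (A - s • 1)
        = A * A - (r + s) • A + (r * s) • (1 : Matrix V V ℝ) := by
      simp only [Matrix.sub_mul, Matrix.mul_sub, Matrix.smul_mul, Matrix.mul_smul,
        Matrix.mul_one, Matrix.one_mul, smul_smul]
      module
    rw [expand, hA2, hrsum, hrprod, hL]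
    module
  have hpk : (A - (k:ℝ) • 1) * Jm = 0 := by
    rw [Matrix.sub_mul, hAJ, Matrix.smul_mul, Matrix.one_mul, sub_self]
  have hp1 : (A - (k:ℝ) • 1) * ((A - r • 1) * (A - s • 1)) = 0 := by
    rw [hq, Matrix.mul_smul, hpk, smul_zero]
  -- polynomial calculus
  set φ := Polynomial.aeval (R := ℝ) A with hφ
  have hφlin : ∀ a : ℝ, φ (X - C a) = A - a • 1 := by
    intro a
    rw [hφ, _root_.map_sub, Polynomial.aeval_X, Polynomial.aeval_C, Algebra.algebraMap_eq_smul_one]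
  have hφC : ∀ a : ℝ, φ (C a) = a • 1 := by
    intro a
    rw [hφ, Polynomial.aeval_C, Algebra.algebraMap_eq_smul_one]
  have hp0 : φ ((X - C (k:ℝ)) * ((X - C r) * (X - C s))) = 0 := by
    rw [_root_.map_mul, _root_.map_mul, hφlin, hφlin, hφlin]; exact hp1
  set c : ℝ := (s - k) * (s - r) with hc
  have hc0 : 0 < c := by
    apply mul_pos_of_neg_of_neg
    · linarith
    · rw [hr, hskey]; linarith
  set B : Matrix V V ℝ := (A - (k:ℝ) • 1) * (A - r • 1) with hB
  have hBphi : B = φ ((X - C (k:ℝ)) * (X - C r)) := by rw [_root_.map_mul, hφlin, hφlin]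
  have hBB : B * B = c • B := by
    have hpoly : ((X - C (k:ℝ)) * (X - C r)) * ((X - C (k:ℝ)) * (X - C r)) =
        ((X - C (k:ℝ)) * ((X - C r) * (X - C s))) * (X - C ((k:ℝ) + r - s))
          + C ((s - k) * (s - r)) * ((X - C (k:ℝ)) * (X - C r)) := by
      simp only [_root_.map_mul, _root_.map_sub, _root_.map_add]
      ring
    have h := congrArg φ hpoly
    simp only [_root_.map_add, _root_.map_mul, hφlin, hφC] at h
    rw [hp1, zero_mul, zero_add] at h
    rw [hB, hc, h]
    simp only [Matrix.smul_mul, Matrix.one_mul, smul_smul]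
  have hBy : B * (A - s • 1) = 0 := by
    have hpoly : ((X - C (k:ℝ)) * (X - C r)) * (X - C s)
        = (X - C (k:ℝ)) * ((X - C r) * (X - C s)) := by ring
    calc B * (A - s • 1) = φ (((X - C (k:ℝ)) * (X - C r)) * (X - C s)) := by
          rw [_root_.map_mul, ← hBphi, hφlin]
      _ = 0 := by rw [hpoly, hp0]
  have hyB : (A - s • 1) * B = 0 := by
    have hpoly : (X - C s) * ((X - C (k:ℝ)) * (X - C r))
        = (X - C (k:ℝ)) * ((X - C r) * (X - C s)) := by ring
    calc (A - s • 1) * B = φ ((X - C s) * ((X - C (k:ℝ)) * (X - C r))) := by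
          rw [_root_.map_mul, ← hBphi, hφlin]
      _ = 0 := by rw [hpoly, hp0]
  set P : Matrix V V ℝ := c⁻¹ • B with hP
  have hPP : P * P = P := by
    rw [hP, Matrix.smul_mul, Matrix.mul_smul, hBB, smul_smul, smul_smul]
    congr 1
    field_simp
  -- linear maps
  set f := (A - s • 1).mulVecLin with hf
  set π := P.mulVecLin with hπ
  have hker : LinearMap.ker f = LinearMap.range π := by
    apply le_antisymm
    · intro x hx
      rw [LinearMap.mem_ker, hf, Matrix.mulVecLin_apply] at hx
      have hAx : A.mulVec x = s • x := by
        rw [Matrix.sub_mulVec, Matrix.smul_mulVec, Matrix.one_mulVec] at hx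
        rw [sub_eq_zero] at hx
        exact hx
      refine ⟨x, ?_⟩
      rw [hπ, Matrix.mulVecLin_apply, hP, Matrix.smul_mulVec, hB,
        ← Matrix.mulVec_mulVec]
      have h1 : (A - r • 1) *ᵥ x = (s - r) • x := by
        rw [Matrix.sub_mulVec, Matrix.smul_mulVec, Matrix.one_mulVec, hAx, ← sub_smul]
      have h2 : (A - (k:ℝ) • 1) *ᵥ ((s - r) • x) = (s - r) • ((s - (k:ℝ)) • x) := by
        rw [Matrix.mulVec_smul]
        congr 1
        rw [Matrix.sub_mulVec, Matrix.smul_mulVec, Matrix.one_mulVec, hAx, ← sub_smul]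
      rw [h1, h2, smul_smul, smul_smul]
      have h3 : c⁻¹ * (s - r) * (s - (k:ℝ)) = 1 := by
        have h4 : (s - r) * (s - (k:ℝ)) = c := by rw [hc]; ring
        rw [mul_assoc, h4, inv_mul_cancel₀ (ne_of_gt hc0)]
      rw [h3, one_smul]
    · rintro _ ⟨u, rfl⟩
      rw [LinearMap.mem_ker, hπ, hf, Matrix.mulVecLin_apply, Matrix.mulVecLin_apply,
        Matrix.mulVec_mulVec, hP, Matrix.mul_smul, hyB, smul_zero, Matrix.zero_mulVec]
  -- the trace computation
  set g : ℕ := Module.finrank ℝ (LinearMap.ker f) with hg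
  have htrB : Matrix.trace B = (v : ℝ) * k + k * r * v := by
    have hBexp : B = A * A - (k:ℝ) • A - r • A + ((k:ℝ) * r) • (1 : Matrix V V ℝ) := by
      rw [hB]
      simp only [Matrix.sub_mul, Matrix.mul_sub, Matrix.smul_mul, Matrix.mul_smul,
        Matrix.mul_one, Matrix.one_mul, smul_smul]
      module
    have htrA : Matrix.trace A = 0 := by rw [hA]; exact trace_adjMatrix (α := ℝ) (G := G)
    have htrAA : Matrix.trace (A * A) = (v : ℝ) * k := by
      rw [Matrix.trace]
      have : ∀ i : V, (A * A).diag i = (k : ℝ) := by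
        intro i
        rw [Matrix.diag_apply, hA, adjMatrix_mul_self_apply_self, hG.regular i]
      rw [Finset.sum_congr rfl fun i _ => this i, Finset.sum_const, Finset.card_univ, hG.card,
        nsmul_eq_mul]
    have htr1 : Matrix.trace (1 : Matrix V V ℝ) = (v : ℝ) := by
      rw [Matrix.trace_one, hG.card]
    rw [hBexp, Matrix.trace_add, Matrix.trace_sub, Matrix.trace_sub, Matrix.trace_smul,
      Matrix.trace_smul, Matrix.trace_smul, htrA, htrAA, htr1]
    simp
  have hgval : (g : ℝ) = c⁻¹ * ((v : ℝ) * k + k * r * v) := by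
    have hproj : LinearMap.IsProj (LinearMap.range π) π := by
      constructor
      · intro x
        exact LinearMap.mem_range_self π x
      · rintro _ ⟨u, rfl⟩
        rw [hπ, Matrix.mulVecLin_apply, Matrix.mulVecLin_apply, Matrix.mulVec_mulVec, hPP]
    have htr := hproj.trace
    have htr2 : LinearMap.trace ℝ (V → ℝ) π = Matrix.trace P := by
      rw [LinearMap.trace_eq_matrix_trace ℝ (Pi.basisFun ℝ V) π,
        LinearMap.toMatrix_eq_toMatrix']
      congr 1
      rw [hπ, ← Matrix.toLin'_apply', LinearMap.toMatrix'_toLin']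
    rw [hg, hker, ← htr, htr2, hP, Matrix.trace_smul, htrB, smul_eq_mul]
  -- rank-nullity and columns
  have hrn : Module.finrank ℝ (LinearMap.range f) + g = v := by
    rw [hg]
    rw [LinearMap.finrank_range_add_finrank_ker f, Module.finrank_fintype_fun_eq_card, hG.card]
  have hsym : (A - s • 1)ᵀ = A - s • 1 := by
    rw [Matrix.transpose_sub, Matrix.transpose_smul, Matrix.transpose_one, hA,
      transpose_adjMatrix]
  have hrangef : LinearMap.range f = Submodule.span ℝ (Set.range (A - s • 1)) := by
    rw [hf, Matrix.range_mulVecLin]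
    congr 2
  -- Euclidean-space transfer
  set e := WithLp.linearEquiv 2 ℝ (V → ℝ) with he
  have hcols : srgCol G s = ⇑e.symm ∘ fun i => (A - s • 1)ᵀ i := by
    funext i
    rfl
  have hspanrank : Module.finrank ℝ (Submodule.span ℝ (Set.range (srgCol G s)))
      = Module.finrank ℝ (LinearMap.range f) := by
    rw [hcols, Set.range_comp]
    rw [show ⇑e.symm = ⇑(e.symm.toLinearMap) from rfl, ← Submodule.map_span e.symm.toLinearMap]
    rw [LinearEquiv.finrank_map_eq e.symm]
    have hfun : (fun i => (A - s • 1)ᵀ i) = (A - s • 1) := by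
      rw [show (fun i => (A - s • 1)ᵀ i) = (A - s • 1)ᵀ from rfl, hsym]
      rfl
    rw [hfun, hrangef]
  -- sum-of-coordinates functional
  set σ0 : (V → ℝ) →ₗ[ℝ] ℝ := ∑ j : V, LinearMap.proj j with hσ0
  set σ : EuclideanSpace ℝ V →ₗ[ℝ] ℝ := σ0 ∘ₗ e.toLinearMap with hσ
  have hσval : ∀ x ∈ Set.range (srgCol G s), σ x = (k : ℝ) - s := by
    rintro _ ⟨i, rfl⟩
    have h1 : σ (srgCol G s i) = ∑ j : V, (A - s • 1) j i := by
      rw [hσ, LinearMap.comp_apply, hσ0, LinearMap.sum_apply]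
      apply Finset.sum_congr rfl
      intro j _
      rfl
    rw [h1]
    have h2 : ∀ j : V, (A - s • 1) j i = A j i - s * (if j = i then 1 else 0) := by
      intro j
      simp [Matrix.sub_apply, Matrix.smul_apply, Matrix.one_apply]
    rw [Finset.sum_congr rfl fun j _ => h2 j, Finset.sum_sub_distrib]
    have h3 : ∑ j : V, A j i = (k : ℝ) := by
      have : ∀ j : V, A j i = A i j := by
        intro j
        rw [hA]
        simp [adjMatrix_apply, adj_comm]
      rw [Finset.sum_congr rfl fun j _ => this j]
      have h4 := hG.regular i
      rw [hA]
      show ∑ j : V, (if G.Adj i j then (1:ℝ) else 0) = (k:ℝ)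
      rw [Finset.sum_boole, ← SimpleGraph.neighborFinset_eq_filter,
        SimpleGraph.card_neighborFinset_eq_degree, h4]
    have h5 : ∑ j : V, s * (if j = i then (1:ℝ) else 0) = s := by
      simp [mul_ite, mul_one, mul_zero, Finset.sum_ite_eq']
    rw [h3, h5]
  have hks0 : (k : ℝ) - s ≠ 0 := by linarith
  -- putting the dimension count together
  have hdim : adim (Set.range (srgCol G s)) + 1 + g = v := by
    have haux := adim_aux (Set.range (srgCol G s)) σ ((k:ℝ) - s) hks0
      (srgCol G s i0) ⟨i0, rfl⟩ hσval
    have : adim (Set.range (srgCol G s)) + 1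
        = Module.finrank ℝ (Submodule.span ℝ (Set.range (srgCol G s))) := by
      rw [adim, direction_affineSpan]
      exact haux
    rw [this, hspanrank, hrn]
  have hdimR : (adim (Set.range (srgCol G s)) : ℝ) = (v : ℝ) - g - 1 := by
    have := congrArg (Nat.cast : ℕ → ℝ) hdim
    push_cast at this
    linarith
  rw [hdimR, hgval]
  -- final arithmetic
  have hkey : ((v : ℝ) * k + k * r * v) * (2 * sd)
      = (((v : ℝ) - 1) * sd + 2 * k + ((v : ℝ) - 1) * L) * ((s - k) * (s - r)) := by
    rw [hr, hskey, hL]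
    rw [hD, hL] at hsd2
    linear_combination (-(((v:ℝ) - 1) * sd) / 2) * hsd2 + (-2 * sd) * hfeas
  have h2sd : (2 : ℝ) * sd ≠ 0 := by positivity
  have hcne : ((s - k) * (s - r)) ≠ 0 := by rw [← hc]; exact ne_of_gt hc0
  have hfrac : c⁻¹ * ((v : ℝ) * k + k * r * v)
      = (((v : ℝ) - 1) * sd + 2 * k + ((v : ℝ) - 1) * L) / (2 * sd) := by
    rw [hc, inv_mul_eq_div, div_eq_div_iff hcne h2sd]
    linear_combination hkey
  rw [hfrac]
  field_simp
  ring
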